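/- For n ≥ 1 and variables x_1,...,x_{n+1} with x̄ = 1/x: det_{1≤i,j≤n+1}(x_i^{n+2-j} - x̄_i^{n+2-j}) = (-1)^n x_{n+1}^{-n} (x_{n+1} - x̄_{n+1}) ∏_{i=1}^n (x_i - x_{n+1})(x̄_i - x_{n+1}) · det_{1≤i,j≤n}(x_i^{n+1-j} - x̄_i^{n+1-j}). -/
import Mathlib

theorem aux1' {F : Type*} [Field F] (t a u v : F) (ht : t ≠ 0) (ha : a ≠ 0) :
    u*t^2 - v*t⁻¹^2 - (a + a⁻¹)*(u*t - v*t⁻¹) + (u - v)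
    = (t - a) * (t - a⁻¹) * t⁻¹ * (u*t - v*t⁻¹) := by
  field_simp
  ring

theorem aux1 {F : Type*} [Field F] (t a : F) (ht : t ≠ 0) (ha : a ≠ 0) (m : ℕ) :
    t^(m+2) - t⁻¹^(m+2) - (a + a⁻¹)*(t^(m+1) - t⁻¹^(m+1)) + (t^m - t⁻¹^m)
    = (t - a) * (t - a⁻¹) * t⁻¹ * (t^(m+1) - t⁻¹^(m+1)) := by
  have := aux1' t a (t^m) (t⁻¹^m) ht ha
  calc t^(m+2) - t⁻¹^(m+2) - (a + a⁻¹)*(t^(m+1) - t⁻¹^(m+1)) + (t^m - t⁻¹^m)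
      = t^m*t^2 - t⁻¹^m*t⁻¹^2 - (a + a⁻¹)*(t^m*t - t⁻¹^m*t⁻¹) + (t^m - t⁻¹^m) := by ring
    _ = (t - a) * (t - a⁻¹) * t⁻¹ * (t^m*t - t⁻¹^m*t⁻¹) := this
    _ = (t - a) * (t - a⁻¹) * t⁻¹ * (t^(m+1) - t⁻¹^(m+1)) := by ring

theorem aux2 {F : Type*} [Field F] (t a : F) (ht : t ≠ 0) (ha : a ≠ 0) :
    (t - a) * (t - a⁻¹) * t⁻¹ = (-a⁻¹) * ((t - a) * (t⁻¹ - a)) := by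
  field_simp
  ring

-- delta-sum helper
theorem auxsum {F : Type*} [Field F] (n m : ℕ) (f : Fin (n+1) → F) :
    (∑ k : Fin (n+1), if (k : ℕ) = m then f k else 0)
    = if h : m < n + 1 then f ⟨m, h⟩ else 0 := by
  split_ifs with h
  · rw [Finset.sum_eq_single (⟨m, h⟩ : Fin (n+1))]
    · simp
    · intro k _ hk
      rw [if_neg]
      exact fun hkm => hk (Fin.ext hkm)
    · simp
  · apply Finset.sum_eq_zero
    intro k _
    rw [if_neg]
    omega

theorem det_sub_pow_succ {F : Type*} [Field F] (n : ℕ) (hn : 1 ≤ n)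
    (x : Fin (n + 1) → F) (hx : ∀ i, x i ≠ 0) :
    Matrix.det (Matrix.of fun i j : Fin (n + 1) =>
        x i ^ (n + 1 - (j : ℕ)) - (x i)⁻¹ ^ (n + 1 - (j : ℕ))) =
      (-1) ^ n * ((x (Fin.last n))⁻¹) ^ n * (x (Fin.last n) - (x (Fin.last n))⁻¹) *
        (∏ i : Fin n, ((x i.castSucc - x (Fin.last n)) * ((x i.castSucc)⁻¹ - x (Fin.last n)))) *
        Matrix.det (Matrix.of fun i j : Fin n =>
          x i.castSucc ^ (n - (j : ℕ)) - (x i.castSucc)⁻¹ ^ (n - (j : ℕ))) := by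
  set N := Fin.last n with hN
  set a := x N with ha
  have haz : a ≠ 0 := hx N
  set c := a + a⁻¹ with hc
  set M : Matrix (Fin (n+1)) (Fin (n+1)) F :=
    Matrix.of fun i j => x i ^ (n + 1 - (j : ℕ)) - (x i)⁻¹ ^ (n + 1 - (j : ℕ)) with hM
  set V : Matrix (Fin (n+1)) (Fin (n+1)) F := Matrix.of fun k j =>
    if (k : ℕ) = (j : ℕ) then 1 else if (k : ℕ) = (j : ℕ) + 1 then -c
      else if (k : ℕ) = (j : ℕ) + 2 then 1 else 0 with hV
  set M₂ : Matrix (Fin (n+1)) (Fin (n+1)) F := Matrix.of fun i j =>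
    if (j : ℕ) = n then x i - (x i)⁻¹
    else (x i - a) * (x i - a⁻¹) * (x i)⁻¹ *
      (x i ^ (n - (j : ℕ)) - (x i)⁻¹ ^ (n - (j : ℕ))) with hM₂
  -- step 1: M * V = M₂
  have hMV : M * V = M₂ := by
    ext i j
    have hxz : x i ≠ 0 := hx i
    rw [Matrix.mul_apply]
    have expand : ∀ k : Fin (n+1), M i k * V k j =
        (if (k:ℕ) = (j:ℕ) then M i k else 0) + ((if (k:ℕ) = (j:ℕ)+1 then -c * M i k else 0)
          + (if (k:ℕ) = (j:ℕ)+2 then M i k else 0)) := by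
      intro k
      simp only [hV, Matrix.of_apply]
      split_ifs <;> first | omega | ring
    rw [Finset.sum_congr rfl (fun k _ => expand k), Finset.sum_add_distrib,
      Finset.sum_add_distrib, auxsum, auxsum, auxsum]
    rcases eq_or_lt_of_le (Nat.lt_succ_iff.mp j.isLt) with hj | hj
    · -- j = n : last column
      rw [dif_pos j.isLt, dif_neg (by omega), dif_neg (by omega)]
      simp [hM, hM₂, hj, show n+1-n = 1 by omega]
    · -- j < n
      have h1 : (j:ℕ) + 1 < n + 1 := by omega
      rw [dif_pos j.isLt, dif_pos h1]
      set m : ℕ := n - 1 - (j:ℕ) with hm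
      have e0 : n + 1 - (j:ℕ) = m + 2 := by omega
      have e1 : n + 1 - ((j:ℕ) + 1) = m + 1 := by omega
      have e3 : n - (j:ℕ) = m + 1 := by omega
      have key := aux1 (x i) a hxz haz m
      have third : (if h : (j:ℕ) + 2 < n + 1 then M i ⟨(j:ℕ)+2, h⟩ else 0)
          = x i ^ m - (x i)⁻¹ ^ m := by
        split_ifs with h2
        · have e2 : n + 1 - ((j:ℕ) + 2) = m := by omega
          simp only [hM, Matrix.of_apply, e2]
        · have hm0 : m = 0 := by omega
          simp [hm0]
      rw [third]
      simp only [hM, hM₂, Matrix.of_apply, e0, e1, if_neg (by omega : ¬ (j:ℕ) = n), e3]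
      calc x i ^ (m+2) - (x i)⁻¹ ^ (m+2) + (-c * (x i ^ (m+1) - (x i)⁻¹ ^ (m+1))
            + (x i ^ m - (x i)⁻¹ ^ m))
          = x i ^ (m+2) - (x i)⁻¹ ^ (m+2) - (a + a⁻¹) * (x i ^ (m+1) - (x i)⁻¹ ^ (m+1))
            + (x i ^ m - (x i)⁻¹ ^ m) := by rw [hc]; ring
        _ = (x i - a) * (x i - a⁻¹) * (x i)⁻¹ * (x i ^ (m+1) - (x i)⁻¹ ^ (m+1)) := key
  -- step 2: det V = 1
  have hdetV : V.det = 1 := by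
    rw [Matrix.det_of_lowerTriangular V]
    · apply Finset.prod_eq_one
      intro k _
      simp [hV]
    · intro k j hkj
      have : (k:ℕ) < (j:ℕ) := hkj
      simp only [hV, Matrix.of_apply]
      rw [if_neg (by omega), if_neg (by omega), if_neg (by omega)]
  have hdet2 : M.det = M₂.det := by
    rw [← hMV, Matrix.det_mul, hdetV, mul_one]
  rw [hdet2, Matrix.det_succ_row M₂ N]
  rw [Finset.sum_eq_single N
    (fun j _ hjN => by
      have hj : (j:ℕ) ≠ n := fun h => hjN (Fin.ext (h.trans (Fin.val_last n).symm))
      have hz : M₂ N j = 0 := by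
        simp only [hM₂, Matrix.of_apply, if_neg hj, ← ha, sub_self, zero_mul]
      rw [hz]; ring)
    (fun h => absurd (Finset.mem_univ N) h)]
  have hsub : (M₂.submatrix N.succAbove N.succAbove) = Matrix.of (fun i j : Fin n =>
      (fun i : Fin n => (x i.castSucc - a) * (x i.castSucc - a⁻¹) * (x i.castSucc)⁻¹) i *
      (Matrix.of fun i j : Fin n =>
        x i.castSucc ^ (n - (j : ℕ)) - (x i.castSucc)⁻¹ ^ (n - (j : ℕ))) i j) := by
    ext i j
    have hjn : (j : ℕ) ≠ n := Nat.ne_of_lt j.isLt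
    simp [hM₂, hN, Fin.succAbove_last, Matrix.submatrix_apply, hjn]
  rw [hsub, Matrix.det_mul_column]
  have hprod : (∏ i : Fin n, (x i.castSucc - a) * (x i.castSucc - a⁻¹) * (x i.castSucc)⁻¹)
      = (-1)^n * (a⁻¹)^n * ∏ i : Fin n, ((x i.castSucc - a) * ((x i.castSucc)⁻¹ - a)) := by
    calc (∏ i : Fin n, (x i.castSucc - a) * (x i.castSucc - a⁻¹) * (x i.castSucc)⁻¹)
        = ∏ i : Fin n, ((-a⁻¹) * ((x i.castSucc - a) * ((x i.castSucc)⁻¹ - a))) :=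
          Finset.prod_congr rfl (fun i _ => aux2 (x i.castSucc) a (hx _) haz)
      _ = (-a⁻¹)^n * ∏ i : Fin n, ((x i.castSucc - a) * ((x i.castSucc)⁻¹ - a)) := by
          rw [Finset.prod_mul_distrib, Finset.prod_const, Finset.card_univ, Fintype.card_fin]
      _ = (-1)^n * (a⁻¹)^n * ∏ i : Fin n, ((x i.castSucc - a) * ((x i.castSucc)⁻¹ - a)) := by
          rw [neg_pow]
  have hone : ((-1 : F))^((N:ℕ) + (N:ℕ)) = 1 := by
    rw [← two_mul, pow_mul]; norm_num
  have hNN : M₂ N N = x N - (x N)⁻¹ := by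
    simp [hM₂, hN]
  rw [hone, hNN, hprod, ← ha]
  ring
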